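/- For every real number $x$ and every $\mu > 0$, one has $0 \le |x| - x \tanh\!\left(\frac{x}{\mu}\right) \le 0.2785\,\mu$. -/

import Mathlib

open Real

private lemma exp_12785 : (2000:ℝ)/557 ≤ Real.exp 1.2785 := by
  have h1 : (2.7182818283:ℝ) < Real.exp 1 := Real.exp_one_gt_d9
  have h2 : (∑ i ∈ Finset.range 6, (0.2785:ℝ) ^ i / (Nat.factorial i)) ≤ Real.exp 0.2785 :=
    Real.sum_le_exp_of_nonneg (by norm_num) 6
  have h3 : Real.exp 1.2785 = Real.exp 1 * Real.exp 0.2785 := by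
    rw [← Real.exp_add]; norm_num
  have hs : (∑ i ∈ Finset.range 6, (0.2785:ℝ) ^ i / (Nat.factorial i)) = 1 + 0.2785 + 0.2785^2/2 + 0.2785^3/6 + 0.2785^4/24 + 0.2785^5/120 := by
    norm_num [Finset.sum_range_succ, Nat.factorial]
  rw [hs] at h2
  rw [h3]
  nlinarith [Real.exp_pos (0.2785:ℝ), Real.exp_pos (1:ℝ)]

private lemma key (t : ℝ) : t ≤ 0.2785 * (Real.exp t + 1) := by
  rcases le_or_gt t 0.2785 with h | h
  · nlinarith [Real.exp_pos t]
  · have h1 : t - 0.2785 ≤ Real.exp (t - 1.2785) := by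
      have := Real.add_one_le_exp (t - 1.2785)
      linarith
    have h2 : Real.exp t = Real.exp 1.2785 * Real.exp (t - 1.2785) := by
      rw [← Real.exp_add]; ring_nf
    have h3 := exp_12785
    have h4 : Real.exp 1.2785 * (t - 0.2785) ≤ Real.exp 1.2785 * Real.exp (t - 1.2785) :=
      mul_le_mul_of_nonneg_left h1 (Real.exp_pos _).le
    nlinarith [Real.exp_pos (1.2785:ℝ)]

private lemma half (x μ : ℝ) (hμ : 0 < μ) (hx : 0 ≤ x) :
    0 ≤ |x| - x * Real.tanh (x / μ) ∧ |x| - x * Real.tanh (x / μ) ≤ 0.2785 * μ := by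
  have hE : 0 < Real.exp (x / μ) := Real.exp_pos _
  set E := Real.exp (x / μ) with hEdef
  have hneg : Real.exp (-(x / μ)) = E⁻¹ := by
    rw [Real.exp_neg, hEdef]
  have htanh : Real.tanh (x / μ) = (E^2 - 1) / (E^2 + 1) := by
    rw [Real.tanh_eq_sinh_div_cosh, Real.sinh_eq, Real.cosh_eq, hneg, ← hEdef]
    field_simp
  have hd : (0:ℝ) < E^2 + 1 := by positivity
  have habs : |x| = x := abs_of_nonneg hx
  have hexpr : |x| - x * Real.tanh (x / μ) = 2 * x / (E^2 + 1) := by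
    rw [habs, htanh]; field_simp; ring
  rw [hexpr]
  constructor
  · positivity
  · rw [div_le_iff₀ hd]
    have hk := key (2 * x / μ)
    have hE2 : Real.exp (2 * x / μ) = E^2 := by
      rw [hEdef, show 2 * x / μ = x / μ + x / μ by ring, Real.exp_add, sq]
    rw [hE2] at hk
    have h5 := mul_le_mul_of_nonneg_left hk hμ.le
    have h6 : μ * (2 * x / μ) = 2 * x := by field_simp
    rw [h6] at h5
    nlinarith
  
/-- The hyperbolic-tangent robust compensation inequality:
`0 ≤ |x| - x tanh(x/μ) ≤ 0.2785 μ` for every real `x` and `μ > 0`. -/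
theorem abs_sub_mul_tanh_bound (x μ : ℝ) (hμ : 0 < μ) :
    0 ≤ |x| - x * Real.tanh (x / μ) ∧ |x| - x * Real.tanh (x / μ) ≤ 0.2785 * μ := by
  rcases le_or_gt 0 x with hx | hx
  · exact half x μ hμ hx
  · have h := half (-x) μ hμ (by linarith)
    have : |(-x)| - (-x) * Real.tanh ((-x) / μ) = |x| - x * Real.tanh (x / μ) := by
      rw [abs_neg, neg_div, Real.tanh_neg]; ring
    rwa [this] at h
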